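/- Let G be a connected simple graph on [N], let e = uv be an edge of G, and let G△e be the graph on [N] ∪ {N+1} obtained by adding a new vertex N+1 adjacent to both u and v. If c is a D(G)-draconian sequence, then the sequence β(c) = (c_1,...,c_N,1) + e_u − e_{N+1}, i.e., the sequence obtained from c by increasing the u-th entry by 1 and appending a final entry 0, is a D(G△e)-draconian sequence. Moreover β is injective. -/
import Mathlib


/-- `c : V → ℕ` is a `D(H)`-draconian sequence for the simple graph `H` on `V`:
the entries sum to `|V| - 1` and, for every nonempty `S ⊆ V`, the partial sum over `S`
is strictly less than the size of `⋃_{i ∈ S} N_{D(H)}(i)`, where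
`N_{D(H)}(i) = {ī} ∪ {j̄ : ij ∈ E(H)}`. -/
def DraconianD {V : Type*} [Fintype V] (H : SimpleGraph V) (c : V → ℕ) : Prop :=
  (∑ v, c v) = Fintype.card V - 1 ∧
    ∀ S : Finset V, S.Nonempty →
      (∑ i ∈ S, c i) < ((S : Set V) ∪ ⋃ i ∈ S, H.neighborSet i).ncard

/-- `G △ e` for `e = uv`: add a new vertex (`none`) adjacent to exactly `u` and `v`. -/
def triExt {V : Type*} (G : SimpleGraph V) (u v : V) : SimpleGraph (Option V) :=
  SimpleGraph.fromRel fun a b =>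
    (∃ x y, a = some x ∧ b = some y ∧ G.Adj x y) ∨ (a = none ∧ (b = some u ∨ b = some v))

lemma triExt_adj_some {V : Type*} {G : SimpleGraph V} {u v x y : V} (h : G.Adj x y) :
    (triExt G u v).Adj (some x) (some y) := by
  refine ⟨by simpa using h.ne, Or.inl (Or.inl ⟨x, y, rfl, rfl, h⟩)⟩

lemma triExt_adj_none {V : Type*} {G : SimpleGraph V} {u v : V} :
    (triExt G u v).Adj (some u) none := by
  refine ⟨by simp, Or.inr (Or.inr ⟨rfl, Or.inl rfl⟩)⟩

theorem stmt3 (N : ℕ) (G : SimpleGraph (Fin N)) (hconn : G.Connected)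
    (u v : Fin N) (he : G.Adj u v) :
    (∀ c : Fin N → ℕ, DraconianD G c →
        DraconianD (triExt G u v)
          (fun o => o.elim 0 fun x => c x + if x = u then 1 else 0)) ∧
      Function.Injective fun (c : Fin N → ℕ) (o : Option (Fin N)) =>
        o.elim 0 fun x => c x + if x = u then 1 else 0 := by
  constructor
  · rintro c ⟨hsum, hpart⟩
    have hN : 0 < N := Fin.pos_iff_nonempty.mpr ⟨u⟩
    set c' : Option (Fin N) → ℕ :=
      (fun o => o.elim 0 fun x => c x + if x = u then 1 else 0) with hc'def
    constructor
    · rw [Fintype.sum_option]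
      have : ∀ x, c' (some x) = c x + (if x = u then 1 else 0) := fun x => rfl
      simp only [this, Finset.sum_add_distrib, hsum,
        Finset.sum_ite_eq' Finset.univ u (fun _ => 1), Finset.mem_univ, if_true]
      simp only [hc'def, Option.elim, Fintype.card_option, Fintype.card_fin]
      omega
    · intro S' hS'
      set T : Finset (Fin N) := Finset.univ.filter (fun x => some x ∈ S') with hT
      have hTmem : ∀ x : Fin N, x ∈ T ↔ some x ∈ S' := by
        intro x; simp [hT]
      have herase : S'.erase none = T.image some := by
        ext o
        cases o with
        | none => simp
        | some x => simp [hTmem]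
      have hsum' : ∑ o ∈ S', c' o = ∑ x ∈ T, c x + (if u ∈ T then 1 else 0) := by
        rw [← Finset.sum_erase S' (show c' none = 0 from rfl), herase,
          Finset.sum_image (fun a _ b _ h => Option.some_injective _ h)]
        have : ∀ x, c' (some x) = c x + (if x = u then 1 else 0) := fun x => rfl
        simp only [this, Finset.sum_add_distrib, Finset.sum_ite_eq' T u (fun _ => 1)]
      set A' : Set (Option (Fin N)) :=
        (S' : Set (Option (Fin N))) ∪ ⋃ o ∈ S', (triExt G u v).neighborSet o with hA'
      have hA'fin : A'.Finite := Set.toFinite _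
      by_cases hTne : T.Nonempty
      · have hlt := hpart T hTne
        set A : Set (Fin N) := (T : Set (Fin N)) ∪ ⋃ i ∈ T, G.neighborSet i with hA
        have hAfin : A.Finite := Set.toFinite _
        have hsub : some '' A ⊆ A' := by
          rintro _ ⟨x, hx, rfl⟩
          rcases hx with hx | hx
          · exact Or.inl ((hTmem x).mp hx)
          · obtain ⟨i, hi, hadj⟩ := by simpa using hx
            refine Or.inr (Set.mem_iUnion₂.mpr ⟨some i, (hTmem i).mp hi, ?_⟩)
            exact triExt_adj_some hadj
        have hcard : A.ncard ≤ A'.ncard := by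
          calc A.ncard = (some '' A).ncard :=
                (Set.ncard_image_of_injective _ (Option.some_injective _)).symm
            _ ≤ A'.ncard := Set.ncard_le_ncard hsub hA'fin
        by_cases hcase : u ∈ T ∨ none ∈ S'
        · have hnone : (none : Option (Fin N)) ∈ A' := by
            rcases hcase with hu | hn
            · exact Or.inr (Set.mem_iUnion₂.mpr ⟨some u, (hTmem u).mp hu, triExt_adj_none⟩)
            · exact Or.inl hn
          have hplus : A.ncard + 1 ≤ A'.ncard := by
            have h1 : (insert (none : Option (Fin N)) (some '' A)).ncard
                = (some '' A).ncard + 1 :=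
              Set.ncard_insert_of_notMem (by simp) (hAfin.image _)
            have h2 : (insert (none : Option (Fin N)) (some '' A)).ncard ≤ A'.ncard :=
              Set.ncard_le_ncard (Set.insert_subset hnone hsub) hA'fin
            rw [h1, Set.ncard_image_of_injective _ (Option.some_injective _)] at h2
            exact h2
          rw [hsum']
          have : (if u ∈ T then 1 else 0) ≤ 1 := by split <;> omega
          omega
        · push_neg at hcase
          rw [hsum', if_neg hcase.1]
          omega
      · have hn : (none : Option (Fin N)) ∈ S' := by
          obtain ⟨o, ho⟩ := hS'
          cases o with
          | none => exact ho
          | some x => exact absurd (hTne ⟨x, (hTmem x).mpr ho⟩) (by simp)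
        have hsum0 : ∑ o ∈ S', c' o = 0 := by
          rw [hsum']
          have : T = ∅ := Finset.not_nonempty_iff_eq_empty.mp hTne
          simp [this]
        rw [hsum0]
        exact (Set.ncard_pos hA'fin).mpr ⟨none, Or.inl hn⟩
  · intro c c' h
    funext x
    have := congrFun h (some x)
    simp only [Option.elim] at this
    omega
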